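/- arXiv:2005.02081 — 2 statements merged into one kernel-verified Lean document; each statement's English description precedes it below -/
import Mathlib

section
/- For every rational number x and every integer n ≥ 0, G_n(x) = Σ_{k=0}^{n} C(x,k)^2 (−1)^{n−k} C(−1−x, n−k). -/
open Finset

/-- Generalized binomial coefficient `C(x,k) = x(x-1)⋯(x-k+1)/k!` for rational `x`. -/
def qchoose (x : ℚ) (k : ℕ) : ℚ := (∏ i ∈ range k, (x - i)) / (Nat.factorial k)

/-- `r` is a `p`-integer: the denominator of `r` (in lowest terms) is not divisible by `p`. -/
def IsPInt (p : ℕ) (r : ℚ) : Prop := ¬ (p ∣ r.den)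

/-- `a ≡ b (mod p^k)` for rationals: `(a - b)/p^k` is a `p`-integer. -/
def RatCong (p k : ℕ) (a b : ℚ) : Prop := IsPInt p ((a - b) / (p : ℚ) ^ k)

/-- The Apéry-like sequence `G_n(x)`. -/
def G (n : ℕ) (x : ℚ) : ℚ :=
  ∑ k ∈ range (n + 1), (n.choose k : ℚ) * (-1) ^ k * qchoose x k * qchoose (-1 - x) k

/-- The Apéry-like sequence `V_n(x)`. -/
def V (n : ℕ) (x : ℚ) : ℚ :=
  ∑ k ∈ range (n + 1),
    (n.choose k : ℚ) * ((n + k).choose k : ℚ) * (-1) ^ k * qchoose x k * qchoose (-1 - x) k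

def Gn (n : ℕ) : ℚ := 16 ^ n * G n (-1/2)
def G3 (n : ℕ) : ℚ := 27 ^ n * G n (-1/3)
def G4 (n : ℕ) : ℚ := 64 ^ n * G n (-1/4)
def G6 (n : ℕ) : ℚ := 432 ^ n * G n (-1/6)

def Vn (n : ℕ) : ℚ := 16 ^ n * V n (-1/2)
def V3 (n : ℕ) : ℚ := 27 ^ n * V n (-1/3)
def V4 (n : ℕ) : ℚ := 64 ^ n * V n (-1/4)
def V6 (n : ℕ) : ℚ := 432 ^ n * V n (-1/6)

/-- Euler numbers: `E_0 = 1`, `E_{2n-1} = 0`, `E_{2n} = -∑_{k=1}^n C(2n,2k) E_{2n-2k}`. -/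
def eulerE : ℕ → ℚ
  | 0 => 1
  | (n + 1) =>
    if (n + 1) % 2 = 1 then 0
    else -∑ k ∈ range ((n + 1) / 2),
        ((n + 1).choose (2 * (k + 1)) : ℚ) * eulerE (n + 1 - 2 * (k + 1))
decreasing_by omega

/-- The sequence `U_n`: `U_0 = 1`, `U_{2n-1} = 0`, `U_{2n} = -2∑_{k=1}^n C(2n,2k) U_{2n-2k}`. -/
def seqU : ℕ → ℚ
  | 0 => 1
  | (n + 1) =>
    if (n + 1) % 2 = 1 then 0
    else -2 * ∑ k ∈ range ((n + 1) / 2),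
        ((n + 1).choose (2 * (k + 1)) : ℚ) * seqU (n + 1 - 2 * (k + 1))
decreasing_by omega

/-- The sequence `s_n`: `s_0 = 1`, `s_n = 1 - ∑_{k=0}^{n-1} C(n,k) 2^{2n-1-2k} s_k`. -/
def seqS : ℕ → ℚ
  | 0 => 1
  | (n + 1) => 1 - ∑ k ∈ (range (n + 1)).attach,
      ((n + 1).choose k.1 : ℚ) * 2 ^ (2 * (n + 1) - 1 - 2 * k.1) * seqS k.1
decreasing_by exact mem_range.mp k.2

/-- Euler polynomials `E_n(x) = 2^{-n} ∑_{k=0}^n C(n,k) (2x-1)^{n-k} E_k`. -/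
def eulerPoly (n : ℕ) (x : ℚ) : ℚ :=
  (∑ k ∈ range (n + 1), (n.choose k : ℚ) * (2 * x - 1) ^ (n - k) * eulerE k) / 2 ^ n

/-- Harmonic numbers `H_n`. -/
def harm (n : ℕ) : ℚ := ∑ k ∈ range n, 1 / ((k : ℚ) + 1)

/-- Legendre/Jacobi symbol of a rational number whose denominator is coprime to `p`. -/
def qLegendre (r : ℚ) (p : ℕ) : ℤ := jacobiSym (r.num * r.den) p

/-- `(B_{p²(p-1)}(-x) - B_{p²(p-1)})/(p²(p-1))`. -/
noncomputable def bratio (p : ℕ) (x : ℚ) : ℚ :=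
  ((Polynomial.bernoulli (p ^ 2 * (p - 1))).eval (-x) - bernoulli (p ^ 2 * (p - 1))) /
    ((p : ℚ) ^ 2 * ((p : ℚ) - 1))

/-- Franel numbers. -/
def franel (n : ℕ) : ℚ := ∑ k ∈ range (n + 1), (n.choose k : ℚ) ^ 3

def aseq (n : ℕ) : ℚ := ∑ k ∈ range (n + 1), (n.choose k : ℚ) ^ 2 * ((2 * k).choose k : ℚ)

def Qseq (n : ℕ) : ℚ := ∑ k ∈ range (n + 1), (n.choose k : ℚ) * (-8) ^ (n - k) * franel k
lemma qchoose_zero (x : ℚ) : qchoose x 0 = 1 := by simp [qchoose]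

lemma qchoose_succ (x : ℚ) (k : ℕ) :
    qchoose x (k+1) = qchoose x k * (x - k) / (k+1) := by
  rw [qchoose, qchoose, Finset.prod_range_succ, Nat.factorial_succ]
  push_cast
  rw [div_mul_eq_mul_div, div_div]
  congr 1
  ring

lemma qchoose_succ_left (x : ℚ) (k : ℕ) :
    qchoose (x+1) (k+1) = qchoose x k * (x+1) / (k+1) := by
  rw [qchoose, qchoose, Finset.prod_range_succ', Nat.factorial_succ]
  push_cast
  rw [div_mul_eq_mul_div, div_div]
  congr 1
  · have h : ∏ i ∈ range k, (x + 1 - ((i:ℚ) + 1)) = ∏ i ∈ range k, (x - (i:ℚ)) :=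
      Finset.prod_congr rfl (fun i _ => by ring)
    rw [h]; ring
  · ring

lemma qchoose_pascal (x : ℚ) (k : ℕ) :
    qchoose (x+1) (k+1) = qchoose x (k+1) + qchoose x k := by
  have h2 : ((k:ℚ)+1) ≠ 0 := by positivity
  rw [qchoose_succ_left, qchoose_succ, div_add' _ _ _ h2]
  congr 1
  ring

/-- partial Vandermonde sum -/
def qS (x : ℚ) (n m : ℕ) : ℚ := ∑ j ∈ range (m+1), qchoose x j * (n.choose (m - j) : ℚ)

lemma qS_zero_m (x : ℚ) (n : ℕ) : qS x n 0 = 1 := by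
  simp [qS, qchoose_zero]

lemma qS_zero_n (x : ℚ) (m : ℕ) : qS x 0 m = qchoose x m := by
  rw [qS, Finset.sum_eq_single_of_mem m (self_mem_range_succ m)]
  · simp
  · intro j hj hne
    have hj' : j < m := lt_of_le_of_ne (Nat.lt_succ_iff.mp (mem_range.mp hj)) hne
    have : m - j ≠ 0 := by omega
    obtain ⟨t, ht⟩ := Nat.exists_eq_succ_of_ne_zero this
    rw [ht]
    simp [Nat.choose]

lemma qS_succ_left (x : ℚ) (n m : ℕ) :
    qS (x+1) n (m+1) = qS x n (m+1) + qS x n m := by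
  have e1 : qS (x+1) n (m+1)
      = (∑ j ∈ range (m+1), qchoose (x+1) (j+1) * (n.choose (m - j) : ℚ))
        + qchoose (x+1) 0 * (n.choose (m+1) : ℚ) := by
    rw [qS, Finset.sum_range_succ']
    simp [Nat.succ_sub_succ]
  have e2 : qS x n (m+1)
      = (∑ j ∈ range (m+1), qchoose x (j+1) * (n.choose (m - j) : ℚ))
        + qchoose x 0 * (n.choose (m+1) : ℚ) := by
    rw [qS, Finset.sum_range_succ']
    simp [Nat.succ_sub_succ]
  rw [e1, e2, qchoose_zero, qchoose_zero, qS]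
  rw [Finset.sum_congr rfl (fun j _ => by rw [qchoose_pascal, add_mul] :
    ∀ j ∈ range (m+1), qchoose (x+1) (j+1) * (n.choose (m - j) : ℚ)
      = qchoose x (j+1) * (n.choose (m - j) : ℚ) + qchoose x j * (n.choose (m - j) : ℚ))]
  rw [Finset.sum_add_distrib]
  ring

lemma qS_succ_n (x : ℚ) (n m : ℕ) :
    qS x (n+1) (m+1) = qS x n (m+1) + qS x n m := by
  rw [qS, Finset.sum_range_succ]
  have e : ∀ j ∈ range (m+1), qchoose x j * ((n+1).choose (m + 1 - j) : ℚ)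
      = qchoose x j * (n.choose (m + 1 - j) : ℚ) + qchoose x j * (n.choose (m - j) : ℚ) := by
    intro j hj
    have hjm : j ≤ m := Nat.lt_succ_iff.mp (mem_range.mp hj)
    have h1 : m + 1 - j = (m - j) + 1 := by omega
    rw [h1, Nat.choose_succ_succ]
    push_cast
    ring
  rw [Finset.sum_congr rfl e, Finset.sum_add_distrib]
  have e2 : qS x n (m+1) = (∑ j ∈ range (m+1), qchoose x j * (n.choose (m + 1 - j) : ℚ))
      + qchoose x (m+1) * (n.choose 0 : ℚ) := by
    rw [qS, Finset.sum_range_succ]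
    simp
  rw [e2, qS]
  simp
  ring

lemma qS_vandermonde (n : ℕ) : ∀ (x : ℚ) (m : ℕ), qchoose (x + n) m = qS x n m := by
  induction n with
  | zero => intro x m; simpa using (qS_zero_n x m).symm
  | succ n ih =>
    intro x m
    have h : x + ((n:ℚ)+1) = (x+1) + n := by ring
    rw [show ((n+1 : ℕ) : ℚ) = (n:ℚ)+1 by push_cast; ring, h, ih (x+1) m]
    cases m with
    | zero => rw [qS_zero_m, qS_zero_m]
    | succ m => rw [qS_succ_left, qS_succ_n]

lemma qchoose_trinomial (x : ℚ) (k j : ℕ) :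
    qchoose x k * qchoose (x - k) j = qchoose x (k+j) * ((k+j).choose k : ℚ) := by
  have hfk : (Nat.factorial k : ℚ) ≠ 0 := by exact_mod_cast (Nat.factorial_pos k).ne'
  have hfj : (Nat.factorial j : ℚ) ≠ 0 := by exact_mod_cast (Nat.factorial_pos j).ne'
  have hfkj : (Nat.factorial (k+j) : ℚ) ≠ 0 := by exact_mod_cast (Nat.factorial_pos (k+j)).ne'
  have hprod : ∏ i ∈ range (k+j), (x - i) =
      (∏ i ∈ range k, (x - i)) * ∏ i ∈ range j, (x - k - i) := by
    rw [Finset.prod_range_add]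
    congr 1
    exact Finset.prod_congr rfl (fun i _ => by push_cast; ring)
  have hfact : ((k+j).factorial : ℚ) = ((k+j).choose k : ℚ) * (k.factorial : ℚ) * (j.factorial : ℚ) := by
    have := Nat.choose_mul_factorial_mul_factorial (Nat.le_add_right k j)
    rw [Nat.add_sub_cancel_left] at this
    exact_mod_cast this.symm
  rw [qchoose, qchoose, qchoose, hprod, hfact]
  have hc : ((k+j).choose k : ℚ) ≠ 0 := by
    exact_mod_cast (Nat.choose_pos (Nat.le_add_right k j)).ne'
  field_simp

lemma prod_shift (x : ℚ) (k : ℕ) :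
    ∏ i ∈ range k, (x + k - i) = ∏ i ∈ range k, (x + 1 + i) := by
  induction k with
  | zero => simp
  | succ k ih =>
    rw [Finset.prod_range_succ' (fun i => x + (↑(k+1):ℚ) - i), Finset.prod_range_succ]
    push_cast
    rw [Finset.prod_congr rfl (fun i _ => by push_cast; ring :
      ∀ i ∈ range k, x + ((k:ℚ)+1) - (↑i+1) = x + k - i), ih]
    ring

lemma qchoose_neg (x : ℚ) (k : ℕ) :
    qchoose (-1 - x) k = (-1)^k * qchoose (x + k) k := by
  rw [qchoose, qchoose]
  have h1 : ∏ i ∈ range k, (-1 - x - i) = (-1)^k * ∏ i ∈ range k, (x + 1 + i) := by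
    rw [Finset.prod_congr rfl (fun i _ => by ring :
      ∀ i ∈ range k, (-1 - x - (i:ℚ)) = (-1) * (x + 1 + i))]
    rw [Finset.prod_mul_distrib, Finset.prod_const]
    simp [card_range]
  rw [h1, ← prod_shift]
  rw [Finset.prod_congr rfl (fun i _ => by ring :
      ∀ i ∈ range k, (x + (k:ℚ) - i) = (x + k) - i)]
  ring


theorem stmt_0 (x : ℚ) (n : ℕ) :
    G n x = ∑ k ∈ range (n + 1), qchoose x k ^ 2 * (-1) ^ (n - k) * qchoose (-1 - x) (n - k) := by
  have hsq : ∀ m : ℕ, ((-1:ℚ))^m * ((-1:ℚ))^m = 1 := by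
    intro m; rw [← pow_add, ← two_mul, pow_mul]; norm_num
  set F : ℕ → ℕ → ℚ :=
    fun k m => qchoose x k * qchoose x m * ((m.choose k : ℕ) : ℚ) * ((n.choose m : ℕ) : ℚ)
    with hF
  have hFzero₁ : ∀ k m, m < k → F k m = 0 := by
    intro k m h; simp [hF, Nat.choose_eq_zero_of_lt h]
  have hFzero₂ : ∀ k m, n < m → F k m = 0 := by
    intro k m h; simp [hF, Nat.choose_eq_zero_of_lt h]
  -- Left side
  have hL : G n x = ∑ m ∈ range (n+1), ∑ k ∈ range (n+1), F k m := by
    rw [G]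
    refine Finset.sum_congr rfl (fun m hm => ?_)
    have hmn : m ≤ n := Nat.lt_succ_iff.mp (mem_range.mp hm)
    rw [qchoose_neg]
    have h4 : qchoose (x + m) m = ∑ k ∈ range (n+1), (m.choose k : ℚ) * qchoose x k := by
      rw [qS_vandermonde, qS]
      rw [Finset.sum_congr rfl (fun j hj => by
        rw [Nat.choose_symm (Nat.lt_succ_iff.mp (mem_range.mp hj)), mul_comm] :
        ∀ j ∈ range (m+1), qchoose x j * ((m.choose (m - j) : ℕ) : ℚ)
          = (m.choose j : ℚ) * qchoose x j)]
      refine Finset.sum_subset (Finset.range_subset_range.mpr (by omega)) ?_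
      intro k _ hk
      have : m < k := by
        simp only [mem_range, not_lt] at hk; omega
      simp [Nat.choose_eq_zero_of_lt this]
    rw [h4, Finset.mul_sum, Finset.mul_sum]
    refine Finset.sum_congr rfl (fun k _ => ?_)
    simp only [hF]
    linear_combination ((n.choose m : ℚ) * qchoose x m * (m.choose k : ℚ) * qchoose x k) * hsq m
  -- Right side
  have hR : ∀ k, k ∈ range (n+1) →
      qchoose x k ^ 2 * (-1) ^ (n - k) * qchoose (-1 - x) (n - k)
        = ∑ m ∈ range (n+1), F k m := by
    intro k hk
    have hkn : k ≤ n := Nat.lt_succ_iff.mp (mem_range.mp hk)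
    rw [qchoose_neg]
    have hcast : x + ((n - k : ℕ) : ℚ) = (x - k) + (n : ℚ) := by
      rw [Nat.cast_sub hkn]; ring
    have step1 : qchoose x k ^ 2 * (-1:ℚ) ^ (n-k) * ((-1)^(n-k) * qchoose (x + ((n-k:ℕ):ℚ)) (n-k))
        = qchoose x k ^ 2 * qS (x - k) n (n-k) := by
      rw [hcast, qS_vandermonde]
      linear_combination (qchoose x k ^ 2 * qS (x - (k:ℚ)) n (n-k)) * hsq (n-k)
    rw [step1, qS, Finset.mul_sum]
    have step2 : ∀ j ∈ range (n - k + 1),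
        qchoose x k ^ 2 * (qchoose (x - k) j * ((n.choose (n - k - j) : ℕ) : ℚ))
          = F k (k + j) := by
      intro j hj
      have hjnk : j ≤ n - k := Nat.lt_succ_iff.mp (mem_range.mp hj)
      have h1 : n - k - j = n - (k + j) := by omega
      have h2 : k + j ≤ n := by omega
      rw [h1, Nat.choose_symm h2]
      have := qchoose_trinomial x k j
      simp only [hF]
      linear_combination (qchoose x k * ((n.choose (k+j) : ℕ) : ℚ)) * qchoose_trinomial x k j
    rw [Finset.sum_congr rfl step2]
    -- reindex: ∑_{j ∈ range (n-k+1)} F k (k+j) = ∑_{m ∈ range (n+1)} F k m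
    have h3 : n - k + 1 = n + 1 - k := by omega
    rw [h3, ← Finset.sum_Ico_eq_sum_range]
    rw [Finset.range_eq_Ico, ← Finset.sum_Ico_consecutive _ (Nat.zero_le k) (by omega : k ≤ n+1)]
    have : ∑ m ∈ Finset.Ico 0 k, F k m = 0 := by
      refine Finset.sum_eq_zero (fun m hm => ?_)
      exact hFzero₁ k m (Finset.mem_Ico.mp hm).2
    rw [this, zero_add]
  rw [hL, Finset.sum_congr rfl hR, Finset.sum_comm]
end

section
/- For every rational number x and every integer n ≥ 0, V_n(x) = Σ_{k=0}^{n} C(x,k)² C(−1−x, n−k)² and V_n(x) = Σ_{k=0}^{n} C(n,k)C(n+k,k)(−1)^{n−k} G_k(x). -/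
open Finset

namespace Stmt9Aux


def f1 (m n k : ℕ) : ℚ :=
  (m.choose k : ℚ) * ((m+k).choose k : ℚ) * (n.choose k : ℚ) * ((n+k).choose k : ℚ)

def g1 (M N : ℕ) : ℕ → ℚ
  | 0 => 0
  | (t+1) => -8*((M:ℚ)+1)*((N:ℚ)+1) * (M.choose t : ℚ) * ((M+t+1).choose t : ℚ)
      * (N.choose t : ℚ) * ((N+t+1).choose t : ℚ)

lemma absorb (M t : ℕ) : ((M:ℚ)+1) * (M.choose t : ℚ) = ((M+1).choose (t+1) : ℚ) * (t+1) := by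
  have := Nat.add_one_mul_choose_eq M t
  exact_mod_cast congrArg (Nat.cast (R := ℚ)) this

lemma absorb2 (M t : ℕ) : ((M+t+1).choose (t+1) : ℚ) * (t+1) = ((M+t+1).choose t : ℚ) * ((M:ℚ)+1) := by
  have h := Nat.choose_succ_right_eq (M+t+1) t
  have h2 : M+t+1-t = M+1 := by omega
  rw [h2] at h
  exact_mod_cast congrArg (Nat.cast (R := ℚ)) h

lemma pascal (M t : ℕ) : ((M+1).choose (t+1) : ℚ) = (M.choose t : ℚ) + (M.choose (t+1) : ℚ) := by
  exact_mod_cast congrArg (Nat.cast (R := ℚ)) (Nat.choose_succ_succ (M) (t))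

lemma side1_k (M N k : ℕ) :
    (3*((M:ℚ)+1)^2 - 4*((M:ℚ)+1)*((N:ℚ)+1) + 3*((N:ℚ)+1)^2) * f1 (M+1) (N+1) k
    - (3*((M:ℚ)+1)^2 + 2*((M:ℚ)+1)*((N:ℚ)+1) + ((N:ℚ)+1)^2) * f1 M (N+1) k
    - (((M:ℚ)+1)^2 + 2*((M:ℚ)+1)*((N:ℚ)+1) + 3*((N:ℚ)+1)^2) * f1 (M+1) N k
    + (((M:ℚ)+1)^2 + ((N:ℚ)+1)^2) * f1 M N k
    = g1 M N (k+1) - g1 M N k := by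
  cases k with
  | zero => simp [f1, g1]; ring
  | succ t =>
    have hM1 : ((M:ℚ)+1) ≠ 0 := by positivity
    have hN1 : ((N:ℚ)+1) ≠ 0 := by positivity
    have arw1 : M+1+(t+1) = M+t+2 := by omega
    have arw2 : N+1+(t+1) = N+t+2 := by omega
    have arw3 : M+(t+1) = M+t+1 := by omega
    have arw4 : N+(t+1) = N+t+1 := by omega
    have arw5 : M+(t+1)+1 = M+t+2 := by omega
    have arw6 : N+(t+1)+1 = N+t+2 := by omega
    simp only [f1, g1, arw1, arw2, arw3, arw4, arw5, arw6]
    -- names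
    have ha' : (M.choose t : ℚ) = ((M+1).choose (t+1) : ℚ) * (t+1) / ((M:ℚ)+1) := by
      field_simp; linear_combination absorb M t
    have ha : (M.choose (t+1) : ℚ)
        = ((M+1).choose (t+1) : ℚ) - ((M+1).choose (t+1) : ℚ) * (t+1) / ((M:ℚ)+1) := by
      rw [← ha']; linear_combination (-1 : ℚ) * pascal M t
    have hb' : ((M+t+1).choose t : ℚ) = ((M+t+1).choose (t+1) : ℚ) * (t+1) / ((M:ℚ)+1) := by
      field_simp; linear_combination (-1 : ℚ) * absorb2 M t
    have hB : ((M+t+2).choose (t+1) : ℚ)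
        = ((M+t+1).choose t : ℚ) + ((M+t+1).choose (t+1) : ℚ) := by
      exact_mod_cast congrArg (Nat.cast (R := ℚ)) (Nat.choose_succ_succ (M+t+1) t)
    have hc' : (N.choose t : ℚ) = ((N+1).choose (t+1) : ℚ) * (t+1) / ((N:ℚ)+1) := by
      field_simp; linear_combination absorb N t
    have hc : (N.choose (t+1) : ℚ)
        = ((N+1).choose (t+1) : ℚ) - ((N+1).choose (t+1) : ℚ) * (t+1) / ((N:ℚ)+1) := by
      rw [← hc']; linear_combination (-1 : ℚ) * pascal N t
    have hd' : ((N+t+1).choose t : ℚ) = ((N+t+1).choose (t+1) : ℚ) * (t+1) / ((N:ℚ)+1) := by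
      field_simp; linear_combination (-1 : ℚ) * absorb2 N t
    have hD : ((N+t+2).choose (t+1) : ℚ)
        = ((N+t+1).choose t : ℚ) + ((N+t+1).choose (t+1) : ℚ) := by
      exact_mod_cast congrArg (Nat.cast (R := ℚ)) (Nat.choose_succ_succ (N+t+1) t)
    rw [hB, hD, ha, hc, ha', hb', hc', hd']
    push_cast
    field_simp
    ring

def f2 (m n k : ℕ) : ℚ := ((m.choose k : ℚ))^2 * (((m+n-k).choose m : ℚ))^2

def qq (M N : ℕ) (j : ℚ) : ℚ :=
  -4*j^2 + 8*((M:ℚ)+1+((N:ℚ)+1))*j - 3*((M:ℚ)+1)^2 - 8*((M:ℚ)+1)*((N:ℚ)+1) - 3*((N:ℚ)+1)^2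

def g2 (M N : ℕ) : ℕ → ℚ
  | 0 => 0
  | (t+1) => qq M N (t+1) * ((M.choose t : ℚ))^2 * (((M+N-t).choose M : ℚ))^2

lemma f2van {m n k : ℕ} (h : n < k) : ((m.choose k : ℚ))^2 * (((m+n-k).choose m : ℚ))^2 = 0 := by
  rcases lt_or_ge m k with hm | hm
  · rw [Nat.choose_eq_zero_of_lt hm]; norm_num
  · rw [Nat.choose_eq_zero_of_lt (show m+n-k < m by omega)]; norm_num

lemma absorbB (M t : ℕ) : ((M:ℚ)+1) * (M.choose t : ℚ) = ((M+1).choose (t+1) : ℚ) * (t+1) := by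
  exact_mod_cast congrArg (Nat.cast (R := ℚ)) (Nat.add_one_mul_choose_eq M t)

lemma side2_k (M N k : ℕ) :
    (3*((M:ℚ)+1)^2 - 4*((M:ℚ)+1)*((N:ℚ)+1) + 3*((N:ℚ)+1)^2) * f2 (M+1) (N+1) k
    - (3*((M:ℚ)+1)^2 + 2*((M:ℚ)+1)*((N:ℚ)+1) + ((N:ℚ)+1)^2) * f2 M (N+1) k
    - (((M:ℚ)+1)^2 + 2*((M:ℚ)+1)*((N:ℚ)+1) + 3*((N:ℚ)+1)^2) * f2 (M+1) N k
    + (((M:ℚ)+1)^2 + ((N:ℚ)+1)^2) * f2 M N k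
    = g2 M N (k+1) - g2 M N k := by
  have hM1 : ((M:ℚ)+1) ≠ 0 := by positivity
  cases k with
  | zero =>
    simp only [f2, g2, Nat.choose_zero_right, Nat.cast_one, Nat.sub_zero, Nat.add_sub_cancel]
    have hMN1 : ((M:ℚ)+(N:ℚ)+1) ≠ 0 := by positivity
    have hY : ((M+1+(N+1)).choose (M+1) : ℚ)
        = ((M+N+1).choose M : ℚ) + ((M+N+1).choose (M+1) : ℚ) := by
      have : M+1+(N+1) = (M+N+1)+1 := by omega
      rw [this]
      exact_mod_cast congrArg (Nat.cast (R := ℚ)) (Nat.choose_succ_succ (M+N+1) M)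
    have hX2 : ((M+N+1).choose (M+1) : ℚ) = ((N:ℚ)+1) * ((M+N+1).choose M : ℚ) / ((M:ℚ)+1) := by
      have h := Nat.choose_succ_right_eq (M+N+1) M
      have h2 : M+N+1-M = N+1 := by omega
      rw [h2] at h
      have h3 : (((M+N+1).choose (M+1) : ℚ)) * ((M:ℚ)+1) = ((M+N+1).choose M : ℚ) * ((N:ℚ)+1) := by
        exact_mod_cast congrArg (Nat.cast (R := ℚ)) h
      field_simp
      linear_combination h3
    have hZ : ((M+N).choose M : ℚ)
        = ((M:ℚ)+1) * ((M+N+1).choose (M+1) : ℚ) / ((M:ℚ)+(N:ℚ)+1) := by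
      have h := Nat.add_one_mul_choose_eq (M+N) M
      have h3 : ((M:ℚ)+(N:ℚ)+1) * ((M+N).choose M : ℚ)
          = ((M+N+1).choose (M+1) : ℚ) * ((M:ℚ)+1) := by
        exact_mod_cast congrArg (Nat.cast (R := ℚ)) h
      field_simp
      linear_combination h3
    have hMN : M+(N+1) = M+N+1 := by omega
    have hMN' : (M+1)+N = M+N+1 := by omega
    rw [hMN, hMN', hY, hZ, hX2]
    simp only [qq]
    field_simp
    ring
  | succ t =>
    rcases le_or_gt t N with htN | htN
    · -- t ≤ N, set l := N - t
      obtain ⟨l, rfl⟩ : ∃ l, N = t + l := ⟨N - t, by omega⟩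
      have harg1 : M+1+(t+l+1)-(t+1) = M+l+1 := by omega
      have harg2 : M+(t+l+1)-(t+1) = M+l := by omega
      have harg3 : M+1+(t+l)-(t+1) = M+l := by omega
      have harg4 : M+(t+l)-(t+1) = M+l-1 := by omega
      have harg5 : M+(t+l)-t = M+l := by omega
      simp only [f2, g2, harg1, harg2, harg3, harg4, harg5]
      -- a-side relations
      have ha' : (M.choose t : ℚ) = ((M+1).choose (t+1) : ℚ) * (t+1) / ((M:ℚ)+1) := by
        field_simp; linear_combination absorbB M t
      have ha : (M.choose (t+1) : ℚ)
          = ((M+1).choose (t+1) : ℚ) - ((M+1).choose (t+1) : ℚ) * (t+1) / ((M:ℚ)+1) := by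
        rw [← ha']
        have hp : ((M+1).choose (t+1) : ℚ) = (M.choose t : ℚ) + (M.choose (t+1) : ℚ) := by
          exact_mod_cast congrArg (Nat.cast (R := ℚ)) (Nat.choose_succ_succ M t)
        linear_combination (-1 : ℚ) * hp
      cases l with
      | zero =>
        simp only [Nat.add_zero]
        rw [Nat.choose_self, Nat.choose_succ_self]
        cases M with
        | zero =>
          simp only [Nat.choose_zero_succ, Nat.choose_self]
          cases t with
          | zero => norm_num [qq]
          | succ u =>
            rw [Nat.choose_eq_zero_of_lt (show (1:ℕ) < u+1+1 by omega)]
            simp [Nat.choose_zero_succ]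
        | succ M' =>
          rw [show M'+1-1 = M' from by omega, Nat.choose_eq_zero_of_lt (show M' < M'+1 by omega)]
          rw [ha, ha']
          simp only [qq, Nat.add_zero, Nat.choose_self]
          push_cast
          field_simp
          ring
      | succ l' =>
        have hMl : ((M:ℚ)+(l':ℚ)+1) ≠ 0 := by positivity
        have harg6 : M+(l'+1)-1 = M+l' := by omega
        have harg7 : M+(l'+1)+1 = M+l'+2 := by omega
        have harg8 : M+(l'+1) = M+l'+1 := by omega
        have harg9 : M+l'+1-1 = M+l' := by omega
        simp only [harg6, harg7, harg8, harg9]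
        have hY : ((M+l'+2).choose (M+1) : ℚ)
            = ((M+l'+1).choose M : ℚ) + ((M+l'+1).choose (M+1) : ℚ) := by
          exact_mod_cast congrArg (Nat.cast (R := ℚ)) (Nat.choose_succ_succ (M+l'+1) M)
        have hX2 : ((M+l'+1).choose (M+1) : ℚ)
            = ((l':ℚ)+1) * ((M+l'+1).choose M : ℚ) / ((M:ℚ)+1) := by
          have h := Nat.choose_succ_right_eq (M+l'+1) M
          have h2 : M+l'+1-M = l'+1 := by omega
          rw [h2] at h
          have h3 : (((M+l'+1).choose (M+1) : ℚ)) * ((M:ℚ)+1)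
              = ((M+l'+1).choose M : ℚ) * ((l':ℚ)+1) := by
            exact_mod_cast congrArg (Nat.cast (R := ℚ)) h
          field_simp; linear_combination h3
        have hW : ((M+l').choose M : ℚ)
            = ((M:ℚ)+1) * ((M+l'+1).choose (M+1) : ℚ) / ((M:ℚ)+(l':ℚ)+1) := by
          have h := Nat.add_one_mul_choose_eq (M+l') M
          have h3 : ((M:ℚ)+(l':ℚ)+1) * ((M+l').choose M : ℚ)
              = ((M+l'+1).choose (M+1) : ℚ) * ((M:ℚ)+1) := by
            exact_mod_cast congrArg (Nat.cast (R := ℚ)) h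
          field_simp; linear_combination h3
        rw [hY, hW, hX2, ha, ha']
        simp only [qq]
        push_cast
        field_simp
        ring
    · -- t > N : everything vanishes
      have h1 : f2 (M+1) (N+1) (t+1) = 0 := f2van (by omega)
      have h2 : f2 M (N+1) (t+1) = 0 := f2van (by omega)
      have h3 : f2 (M+1) N (t+1) = 0 := f2van (by omega)
      have h4 : f2 M N (t+1) = 0 := f2van (by omega)
      have h5 : g2 M N (t+2) = 0 := by
        have h : ((M.choose (t+1) : ℚ))^2 * (((M+N-(t+1)).choose M : ℚ))^2 = 0 := f2van (by omega)
        simp only [g2]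
        push_cast
        linear_combination (qq M N ((t:ℚ)+1+1)) * h
      have h6 : g2 M N (t+1) = 0 := by
        have h : ((M.choose t : ℚ))^2 * (((M+N-t).choose M : ℚ))^2 = 0 := f2van (by omega)
        simp only [g2]
        push_cast
        linear_combination (qq M N ((t:ℚ)+1)) * h
      rw [h1, h2, h3, h4, h5, h6]
      ring
-- vanishing lemmas
lemma f1van {m n k : ℕ} (h : m < k) : f1 m n k = 0 := by
  simp [f1, Nat.choose_eq_zero_of_lt h]

lemma f2van' {m n k : ℕ} (h : n < k) : f2 m n k = 0 := f2van h

def Sq (m n : ℕ) : ℚ := ∑ k ∈ range (m+n+1), f1 m n k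
def Rq (m n : ℕ) : ℚ := ∑ k ∈ range (m+n+1), f2 m n k

lemma sum_f1_eq (m n : ℕ) {K : ℕ} (h : m+1 ≤ K) : ∑ k ∈ range K, f1 m n k = Sq m n := by
  unfold Sq
  rcases le_total K (m+n+1) with hK | hK
  · exact Finset.sum_subset (Finset.range_subset_range.2 hK)
      (fun x _ hx => f1van (by simp only [Finset.mem_range, not_lt] at hx; omega))
  · exact (Finset.sum_subset (Finset.range_subset_range.2 hK)
      (fun x _ hx => f1van (by simp only [Finset.mem_range, not_lt] at hx; omega))).symm

lemma sum_f2_eq (m n : ℕ) {K : ℕ} (h : n+1 ≤ K) : ∑ k ∈ range K, f2 m n k = Rq m n := by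
  unfold Rq
  rcases le_total K (m+n+1) with hK | hK
  · exact Finset.sum_subset (Finset.range_subset_range.2 hK)
      (fun x _ hx => f2van' (by simp only [Finset.mem_range, not_lt] at hx; omega))
  · exact (Finset.sum_subset (Finset.range_subset_range.2 hK)
      (fun x _ hx => f2van' (by simp only [Finset.mem_range, not_lt] at hx; omega))).symm

lemma recS (M N : ℕ) :
    (3*((M:ℚ)+1)^2 - 4*((M:ℚ)+1)*((N:ℚ)+1) + 3*((N:ℚ)+1)^2) * Sq (M+1) (N+1)
    - (3*((M:ℚ)+1)^2 + 2*((M:ℚ)+1)*((N:ℚ)+1) + ((N:ℚ)+1)^2) * Sq M (N+1)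
    - (((M:ℚ)+1)^2 + 2*((M:ℚ)+1)*((N:ℚ)+1) + 3*((N:ℚ)+1)^2) * Sq (M+1) N
    + (((M:ℚ)+1)^2 + ((N:ℚ)+1)^2) * Sq M N = 0 := by
  have K := M+N+3
  rw [← sum_f1_eq (M+1) (N+1) (show M+2 ≤ M+N+3 by omega),
      ← sum_f1_eq M (N+1) (show M+1 ≤ M+N+3 by omega),
      ← sum_f1_eq (M+1) N (show M+2 ≤ M+N+3 by omega),
      ← sum_f1_eq M N (show M+1 ≤ M+N+3 by omega),
      Finset.mul_sum, Finset.mul_sum, Finset.mul_sum, Finset.mul_sum,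
      ← Finset.sum_sub_distrib, ← Finset.sum_sub_distrib, ← Finset.sum_add_distrib]
  rw [Finset.sum_congr rfl (fun k _ => side1_k M N k), Finset.sum_range_sub (g1 M N)]
  have h1 : g1 M N (M+N+3) = 0 := by
    show g1 M N ((M+N+2)+1) = 0
    simp [g1, Nat.choose_eq_zero_of_lt (show M < M+N+2 by omega)]
  rw [h1]
  simp [g1]

lemma recR (M N : ℕ) :
    (3*((M:ℚ)+1)^2 - 4*((M:ℚ)+1)*((N:ℚ)+1) + 3*((N:ℚ)+1)^2) * Rq (M+1) (N+1)
    - (3*((M:ℚ)+1)^2 + 2*((M:ℚ)+1)*((N:ℚ)+1) + ((N:ℚ)+1)^2) * Rq M (N+1)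
    - (((M:ℚ)+1)^2 + 2*((M:ℚ)+1)*((N:ℚ)+1) + 3*((N:ℚ)+1)^2) * Rq (M+1) N
    + (((M:ℚ)+1)^2 + ((N:ℚ)+1)^2) * Rq M N = 0 := by
  rw [← sum_f2_eq (M+1) (N+1) (show N+2 ≤ M+N+3 by omega),
      ← sum_f2_eq M (N+1) (show N+2 ≤ M+N+3 by omega),
      ← sum_f2_eq (M+1) N (show N+1 ≤ M+N+3 by omega),
      ← sum_f2_eq M N (show N+1 ≤ M+N+3 by omega),
      Finset.mul_sum, Finset.mul_sum, Finset.mul_sum, Finset.mul_sum,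
      ← Finset.sum_sub_distrib, ← Finset.sum_sub_distrib, ← Finset.sum_add_distrib]
  rw [Finset.sum_congr rfl (fun k _ => side2_k M N k), Finset.sum_range_sub (g2 M N)]
  have h1 : g2 M N (M+N+3) = 0 := by
    show g2 M N ((M+N+2)+1) = 0
    simp [g2, Nat.choose_eq_zero_of_lt (show M < M+N+2 by omega)]
  rw [h1]
  simp [g2]

lemma Sq_zero_left (n : ℕ) : Sq 0 n = 1 := by
  unfold Sq
  rw [Finset.sum_eq_single_of_mem 0 (Finset.mem_range.2 (by omega))
    (fun b _ hb => f1van (Nat.pos_of_ne_zero hb))]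
  simp [f1]

lemma Sq_zero_right (m : ℕ) : Sq m 0 = 1 := by
  unfold Sq
  rw [Finset.sum_eq_single_of_mem 0 (Finset.mem_range.2 (by omega))
    (fun b _ hb => by simp [f1, Nat.choose_eq_zero_of_lt (Nat.pos_of_ne_zero hb)])]
  simp [f1]

lemma Rq_zero_left (n : ℕ) : Rq 0 n = 1 := by
  unfold Rq
  rw [Finset.sum_eq_single_of_mem 0 (Finset.mem_range.2 (by omega))
    (fun b _ hb => by simp [f2, Nat.choose_eq_zero_of_lt (Nat.pos_of_ne_zero hb)])]
  simp [f2]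

lemma Rq_zero_right (m : ℕ) : Rq m 0 = 1 := by
  unfold Rq
  rw [Finset.sum_eq_single_of_mem 0 (Finset.mem_range.2 (by omega))
    (fun b _ hb => f2van' (Nat.pos_of_ne_zero hb))]
  simp [f2]

lemma main_nat (m n : ℕ) : Sq m n = Rq m n := by
  have key : ∀ s m n : ℕ, m + n ≤ s → Sq m n = Rq m n := by
    intro s
    induction s with
    | zero =>
      intro m n h
      have hm : m = 0 := by omega
      have hn : n = 0 := by omega
      subst hm; subst hn
      rw [Sq_zero_left, Rq_zero_left]
    | succ s ih =>
      intro m n h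
      cases m with
      | zero => rw [Sq_zero_left, Rq_zero_left]
      | succ M =>
        cases n with
        | zero => rw [Sq_zero_right, Rq_zero_right]
        | succ N =>
          have i1 : Sq M (N+1) = Rq M (N+1) := ih M (N+1) (by omega)
          have i2 : Sq (M+1) N = Rq (M+1) N := ih (M+1) N (by omega)
          have i3 : Sq M N = Rq M N := ih M N (by omega)
          have hc0 : (3*((M:ℚ)+1)^2 - 4*((M:ℚ)+1)*((N:ℚ)+1) + 3*((N:ℚ)+1)^2) ≠ 0 := by
            have : (0:ℚ) < 3*((M:ℚ)+1)^2 - 4*((M:ℚ)+1)*((N:ℚ)+1) + 3*((N:ℚ)+1)^2 := by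
              nlinarith [sq_nonneg ((M:ℚ) - (N:ℚ)), sq_nonneg ((M:ℚ)+1), sq_nonneg ((N:ℚ)+1),
                Nat.cast_nonneg (α := ℚ) M, Nat.cast_nonneg (α := ℚ) N]
            exact ne_of_gt this
          have e1 := recS M N
          have e2 := recR M N
          have key2 : (3*((M:ℚ)+1)^2 - 4*((M:ℚ)+1)*((N:ℚ)+1) + 3*((N:ℚ)+1)^2) * Sq (M+1) (N+1)
              = (3*((M:ℚ)+1)^2 - 4*((M:ℚ)+1)*((N:ℚ)+1) + 3*((N:ℚ)+1)^2) * Rq (M+1) (N+1) := by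
            linear_combination e1 - e2
              + (3*((M:ℚ)+1)^2 + 2*((M:ℚ)+1)*((N:ℚ)+1) + ((N:ℚ)+1)^2) * i1
              + (((M:ℚ)+1)^2 + 2*((M:ℚ)+1)*((N:ℚ)+1) + 3*((N:ℚ)+1)^2) * i2
              - (((M:ℚ)+1)^2 + ((N:ℚ)+1)^2) * i3
          exact mul_left_cancel₀ hc0 key2
  exact key (m+n) m n le_rfl


lemma qchoose_succ (x : ℚ) (k : ℕ) : qchoose x (k+1) = qchoose x k * (x - k) / (k+1) := by
  unfold qchoose
  rw [Finset.prod_range_succ, Nat.factorial_succ]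
  push_cast
  rw [div_mul_eq_mul_div, div_div]
  ring

lemma qchoose_nat (m k : ℕ) : qchoose (m:ℚ) k = (m.choose k : ℚ) := by
  induction k with
  | zero => simp [qchoose]
  | succ k ih =>
    have key : (m.choose (k+1) : ℚ) * ((k:ℚ)+1) = (m.choose k : ℚ) * ((m:ℚ) - k) := by
      rcases le_or_gt k m with h | h
      · have h3 := congrArg (Nat.cast (R := ℚ)) (Nat.choose_succ_right_eq m k)
        push_cast [Nat.cast_sub h] at h3
        linear_combination h3
      · rw [Nat.choose_eq_zero_of_lt h, Nat.choose_eq_zero_of_lt (by omega)]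
        simp
    rw [qchoose_succ, ih]
    have h2 : ((k:ℚ)+1) ≠ 0 := by positivity
    rw [div_eq_iff h2]
    linear_combination (-1:ℚ) * key

lemma qchoose_neg_nat (m k : ℕ) :
    qchoose (-1-(m:ℚ)) k = (-1)^k * ((m+k).choose k : ℚ) := by
  induction k with
  | zero => simp [qchoose]
  | succ k ih =>
    have key : ((m+k+1).choose (k+1) : ℚ) * ((k:ℚ)+1) = ((m+k).choose k : ℚ) * ((m:ℚ)+k+1) := by
      have h3 := congrArg (Nat.cast (R := ℚ)) (Nat.add_one_mul_choose_eq (m+k) k)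
      push_cast [Nat.succ_eq_add_one] at h3
      linear_combination (-1:ℚ) * h3
    rw [qchoose_succ, ih, show m+(k+1) = m+k+1 from by omega]
    have h2 : ((k:ℚ)+1) ≠ 0 := by positivity
    rw [div_eq_iff h2]
    linear_combination ((-1:ℚ))^k * key

open Polynomial

noncomputable def Cp (k : ℕ) : Polynomial ℚ := C ((k.factorial : ℚ)⁻¹) * ∏ i ∈ range k, (X - C (i:ℚ))
noncomputable def Cq (k : ℕ) : Polynomial ℚ := (Cp k).comp (C (-1) - X)

lemma evalCp (x : ℚ) (k : ℕ) : (Cp k).eval x = qchoose x k := by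
  simp [Cp, qchoose, eval_prod, div_eq_mul_inv, mul_comm]

lemma evalCq (x : ℚ) (k : ℕ) : (Cq k).eval x = qchoose (-1-x) k := by
  simp [Cq, eval_comp, evalCp]

noncomputable def P1 (n : ℕ) : Polynomial ℚ :=
  ∑ k ∈ range (n+1), C ((n.choose k : ℚ) * ((n+k).choose k : ℚ) * (-1)^k) * (Cp k * Cq k)
noncomputable def P2 (n : ℕ) : Polynomial ℚ :=
  ∑ k ∈ range (n+1), (Cp k)^2 * (Cq (n-k))^2

lemma evalP1 (n : ℕ) (x : ℚ) : (P1 n).eval x = V n x := by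
  simp only [P1, V, eval_finset_sum, eval_mul, eval_pow, eval_C, evalCp, evalCq]
  exact Finset.sum_congr rfl (fun k _ => by ring)

lemma evalP2 (n : ℕ) (x : ℚ) :
    (P2 n).eval x = ∑ k ∈ range (n+1), qchoose x k ^ 2 * qchoose (-1-x) (n-k) ^ 2 := by
  simp only [P2, eval_finset_sum, eval_mul, eval_pow, evalCp, evalCq]

lemma P1_eq_P2 (n : ℕ) : P1 n = P2 n := by
  apply Polynomial.eq_of_infinite_eval_eq
  apply Set.infinite_of_injective_forall_mem (f := (fun m => (m:ℚ) : ℕ → ℚ))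
    (Nat.cast_injective)
  intro m
  show (P1 n).eval (m:ℚ) = (P2 n).eval (m:ℚ)
  rw [evalP1, evalP2]
  have hL : V n (m:ℚ) = Sq m n := by
    have hterm : ∀ k, (n.choose k : ℚ) * ((n + k).choose k : ℚ) * (-1) ^ k * qchoose (m:ℚ) k
        * qchoose (-1 - (m:ℚ)) k = f1 n m k := by
      intro k
      rw [qchoose_nat, qchoose_neg_nat]
      unfold f1
      rcases Nat.even_or_odd k with he | ho
      · rw [he.neg_one_pow]; ring
      · rw [ho.neg_one_pow]; ring
    calc V n (m:ℚ) = ∑ k ∈ range (n+1), f1 n m k := by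
          rw [V]; exact Finset.sum_congr rfl (fun k _ => hterm k)
      _ = Sq n m := sum_f1_eq n m (by omega)
      _ = Sq m n := by
          unfold Sq
          rw [show n+m+1 = m+n+1 from by omega]
          exact Finset.sum_congr rfl (fun k _ => by unfold f1; ring)
  have hR : ∑ k ∈ range (n+1), qchoose (m:ℚ) k ^ 2 * qchoose (-1-(m:ℚ)) (n-k) ^ 2 = Rq m n := by
    have hterm : ∀ k ∈ range (n+1),
        qchoose (m:ℚ) k ^ 2 * qchoose (-1-(m:ℚ)) (n-k) ^ 2 = f2 m n k := by
      intro k hk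
      have hk' : k ≤ n := by have := Finset.mem_range.1 hk; omega
      rw [qchoose_nat, qchoose_neg_nat]
      have e1 : m+(n-k) = m+n-k := by omega
      have e2 : (m+n-k).choose (n-k) = (m+n-k).choose m := by
        rw [show (n-k) = (m+n-k) - m from by omega]
        have h3 : m ≤ m+n-k := by omega
        rw [Nat.choose_symm h3]
      rw [e1, e2]
      unfold f2
      rw [mul_pow, ← pow_mul, mul_comm (n-k) 2, pow_mul, neg_one_sq, one_pow]
      ring
    rw [Finset.sum_congr rfl hterm]
    exact sum_f2_eq m n (le_refl (n+1))
  rw [hL, main_nat, ← hR]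

lemma lemA : ∀ (m : ℕ) (n a : ℕ), m ≤ n →
    ∑ i ∈ range (m+1), (-1:ℚ)^i * (m.choose i : ℚ) * ((a+i).choose n : ℚ)
      = (-1)^m * (a.choose (n-m) : ℚ) := by
  intro m
  induction m with
  | zero => intro n a _; simp
  | succ m ih =>
    intro n a hm
    have key : ∀ b : ℕ, ∑ i ∈ range (m+2), (-1:ℚ)^i * (m.choose i : ℚ) * ((b+i).choose n : ℚ)
        = (-1)^m * (b.choose (n-m) : ℚ) := by
      intro b
      rw [Finset.sum_range_succ, Nat.choose_eq_zero_of_lt (show m < m+1 by omega)]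
      simp only [Nat.cast_zero, mul_zero, zero_mul, add_zero]
      exact ih n b (by omega)
    have step : ∑ i ∈ range (m+1+1), (-1:ℚ)^i * ((m+1).choose i : ℚ) * ((a+i).choose n : ℚ)
        = (∑ i ∈ range (m+2), (-1:ℚ)^i * (m.choose i : ℚ) * ((a+i).choose n : ℚ))
          + (∑ i ∈ range (m+1), (-1:ℚ)^(i+1) * (m.choose i : ℚ) * (((a+1)+i).choose n : ℚ)) := by
      rw [Finset.sum_range_succ' (fun i => (-1:ℚ)^i * ((m+1).choose i : ℚ) * ((a+i).choose n : ℚ)) (m+1),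
          Finset.sum_range_succ' (fun i => (-1:ℚ)^i * (m.choose i : ℚ) * ((a+i).choose n : ℚ)) (m+1)]
      have pw : ∀ i,
          (-1:ℚ)^(i+1) * ((m+1).choose (i+1) : ℚ) * ((a+(i+1)).choose n : ℚ)
          = (-1:ℚ)^(i+1) * (m.choose (i+1) : ℚ) * ((a+(i+1)).choose n : ℚ)
            + (-1:ℚ)^(i+1) * (m.choose i : ℚ) * (((a+1)+i).choose n : ℚ) := by
        intro i
        have hp : ((m+1).choose (i+1) : ℚ) = (m.choose i : ℚ) + (m.choose (i+1) : ℚ) := by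
          exact_mod_cast congrArg (Nat.cast (R := ℚ)) (Nat.choose_succ_succ m i)
        rw [hp, show (a+1)+i = a+(i+1) from by omega]
        ring
      rw [Finset.sum_congr rfl (fun i _ => pw i), Finset.sum_add_distrib]
      simp only [Nat.choose_zero_right]
      ring
    rw [step, key a]
    have ih1 := ih n (a+1) (by omega)
    have e : ∑ i ∈ range (m+1), (-1:ℚ)^(i+1) * (m.choose i : ℚ) * (((a+1)+i).choose n : ℚ)
        = -((-1:ℚ)^m * ((a+1).choose (n-m) : ℚ)) := by
      rw [← ih1, ← Finset.sum_neg_distrib]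
      exact Finset.sum_congr rfl (fun i _ => by ring)
    rw [e]
    have hp : ((a+1).choose (n-m) : ℚ) = (a.choose (n-m-1) : ℚ) + (a.choose (n-m) : ℚ) := by
      have h1 : n - m = (n-m-1)+1 := by omega
      rw [h1]
      exact_mod_cast congrArg (Nat.cast (R := ℚ)) (Nat.choose_succ_succ a (n-m-1))
    rw [hp, show n-(m+1) = n-m-1 from by omega]
    ring

lemma lemB (n j : ℕ) (hj : j ≤ n) :
    ∑ k ∈ range (n+1),
      (-1:ℚ)^(n-k) * (n.choose k : ℚ) * ((n+k).choose k : ℚ) * (k.choose j : ℚ)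
      = (n.choose j : ℚ) * ((n+j).choose j : ℚ) := by
  have hsub : ∑ k ∈ range (n+1),
      (-1:ℚ)^(n-k) * (n.choose k : ℚ) * ((n+k).choose k : ℚ) * (k.choose j : ℚ)
      = ∑ k ∈ Finset.Ico j (n+1),
      (-1:ℚ)^(n-k) * (n.choose k : ℚ) * ((n+k).choose k : ℚ) * (k.choose j : ℚ) := by
    symm
    apply Finset.sum_subset
    · intro x hx
      simp only [Finset.mem_Ico] at hx
      exact Finset.mem_range.2 hx.2
    · intro x hx hnx
      simp only [Finset.mem_range] at hx
      simp only [Finset.mem_Ico, not_and, not_le] at hnx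
      rw [Nat.choose_eq_zero_of_lt (show x < j by omega)]
      ring
  rw [hsub, Finset.sum_Ico_eq_sum_range, show n+1-j = (n-j)+1 from by omega]
  have pw : ∀ i ∈ range ((n-j)+1),
      (-1:ℚ)^(n-(j+i)) * (n.choose (j+i) : ℚ) * ((n+(j+i)).choose (j+i) : ℚ) * ((j+i).choose j : ℚ)
      = ((n.choose j : ℚ) * (-1:ℚ)^(n-j))
        * ((-1:ℚ)^i * ((n-j).choose i : ℚ) * (((n+j)+i).choose n : ℚ)) := by
    intro i hi
    have hi' : i ≤ n - j := by have := Finset.mem_range.1 hi; omega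
    have h1 : (n.choose (j+i)) * ((j+i).choose j) = n.choose j * ((n-j).choose i) := by
      have := Nat.choose_mul (n := n) (show j ≤ j+i by omega)
      rw [show (j+i)-j = i from by omega] at this
      exact this
    have h2 : ((n+(j+i)).choose (j+i)) = ((n+j)+i).choose n := by
      rw [show n+(j+i) = (n+j)+i from by omega]
      rw [← Nat.choose_symm (show n ≤ (n+j)+i by omega), show (n+j)+i-n = j+i from by omega]
    have h3 : (-1:ℚ)^(n-(j+i)) * (-1:ℚ)^i = (-1:ℚ)^(n-j) := by
      rw [← pow_add, show n-(j+i)+i = n-j from by omega]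
    have h4 : (-1:ℚ)^i * (-1:ℚ)^i = 1 := by
      rw [← pow_add]
      exact Even.neg_one_pow ⟨i, by omega⟩
    have h1' : (n.choose (j+i) : ℚ) * ((j+i).choose j : ℚ)
        = (n.choose j : ℚ) * ((n-j).choose i : ℚ) := by exact_mod_cast congrArg (Nat.cast (R := ℚ)) h1
    have h5 : (-1:ℚ)^(n-(j+i)) = (-1:ℚ)^(n-j) * (-1:ℚ)^i := by
      calc (-1:ℚ)^(n-(j+i)) = (-1:ℚ)^(n-(j+i)) * ((-1:ℚ)^i * (-1:ℚ)^i) := by rw [h4]; ring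
        _ = ((-1:ℚ)^(n-(j+i)) * (-1:ℚ)^i) * (-1:ℚ)^i := by ring
        _ = (-1:ℚ)^(n-j) * (-1:ℚ)^i := by rw [h3]
    rw [h2, h5]
    linear_combination ((-1:ℚ)^(n-j) * (-1:ℚ)^i * (((n+j)+i).choose n : ℚ)) * h1'
  rw [Finset.sum_congr rfl pw, ← Finset.mul_sum, lemA (n-j) n (n+j) (by omega),
      show n-(n-j) = j from by omega]
  have h4 : (-1:ℚ)^(n-j) * (-1:ℚ)^(n-j) = 1 := by
    rw [← pow_add]; exact Even.neg_one_pow ⟨n-j, by omega⟩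
  have : ((n+j).choose j : ℚ) = ((n+j).choose (n:ℕ) : ℚ) := by
    rw [← Nat.choose_symm (show j ≤ n+j by omega), show n+j-j = n from by omega]
  rw [this]
  calc (n.choose j : ℚ) * (-1:ℚ)^(n-j) * ((-1:ℚ)^(n-j) * ((n+j).choose n : ℚ))
      = ((-1:ℚ)^(n-j) * (-1:ℚ)^(n-j)) * ((n.choose j : ℚ) * ((n+j).choose n : ℚ)) := by ring
    _ = (n.choose j : ℚ) * ((n+j).choose n : ℚ) := by rw [h4]; ring

theorem part2 (x : ℚ) (n : ℕ) :
    V n x = ∑ k ∈ range (n + 1),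
      (n.choose k : ℚ) * ((n + k).choose k : ℚ) * (-1) ^ (n - k) * G k x := by
  have hG : ∀ k ∈ range (n+1),
      (n.choose k : ℚ) * ((n + k).choose k : ℚ) * (-1:ℚ) ^ (n - k) * G k x
      = ∑ j ∈ range (n+1), (n.choose k : ℚ) * ((n + k).choose k : ℚ) * (-1:ℚ) ^ (n - k)
          * ((k.choose j : ℚ) * (-1) ^ j * qchoose x j * qchoose (-1 - x) j) := by
    intro k hk
    have hk' : k ≤ n := by have := Finset.mem_range.1 hk; omega
    rw [G, Finset.mul_sum]
    apply Finset.sum_subset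
    · exact Finset.range_subset_range.2 (by omega)
    · intro j hj hnj
      simp only [Finset.mem_range, not_lt] at hnj
      rw [Nat.choose_eq_zero_of_lt (show k < j by omega)]
      simp
  rw [Finset.sum_congr rfl hG, Finset.sum_comm]
  rw [V]
  apply Finset.sum_congr rfl
  intro j hj
  have hj' : j ≤ n := by have := Finset.mem_range.1 hj; omega
  have : ∑ k ∈ range (n+1), (n.choose k : ℚ) * ((n + k).choose k : ℚ) * (-1:ℚ) ^ (n - k)
          * ((k.choose j : ℚ) * (-1) ^ j * qchoose x j * qchoose (-1 - x) j)
      = ((-1:ℚ) ^ j * qchoose x j * qchoose (-1 - x) j)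
        * ∑ k ∈ range (n+1),
            (-1:ℚ)^(n-k) * (n.choose k : ℚ) * ((n+k).choose k : ℚ) * (k.choose j : ℚ) := by
    rw [Finset.mul_sum]
    exact Finset.sum_congr rfl (fun k _ => by ring)
  rw [this, lemB n j hj']
  ring


end Stmt9Aux

theorem stmt_9 (x : ℚ) (n : ℕ) :
    V n x = ∑ k ∈ range (n + 1), qchoose x k ^ 2 * qchoose (-1 - x) (n - k) ^ 2 ∧
    V n x = ∑ k ∈ range (n + 1),
      (n.choose k : ℚ) * ((n + k).choose k : ℚ) * (-1) ^ (n - k) * G k x := by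
  constructor
  · rw [← Stmt9Aux.evalP1 n x, Stmt9Aux.P1_eq_P2, Stmt9Aux.evalP2]
  · exact Stmt9Aux.part2 x n
end
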